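/- arXiv:1710.11606 — 2 statements merged into one kernel-verified Lean document; each statement's English description precedes it below -/
import Mathlib

section
/- Let T ≥ 1 and x ∈ ℝ^T. If |x_i| < 1 for some i ≤ T, then there exists j ≤ i such that |x_j| < 1 and the partial derivative satisfies |∂f̄_T/∂x_j (x)| > 1; in particular ‖∇f̄_T(x)‖ > 1, where ‖·‖ is the Euclidean norm. -/
/-- Ψ(x) = 0 for x ≤ 1/2 and Ψ(x) = exp(1 − 1/(2x−1)²) for x > 1/2. -/
noncomputable def Psi (x : ℝ) : ℝ :=
  if x ≤ 1/2 then 0 else Real.exp (1 - 1/(2*x - 1)^2)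

/-- Φ(x) = √e · ∫_{−∞}^x exp(−t²/2) dt. -/
noncomputable def Phi (x : ℝ) : ℝ :=
  Real.sqrt (Real.exp 1) * ∫ t in Set.Iic x, Real.exp (-t^2/2)

/-- 0-based coordinates of `x : ℝ^T` extended by zero. -/
noncomputable def pad (T : ℕ) (x : Fin T → ℝ) (i : ℕ) : ℝ :=
  if h : i < T then x ⟨i, h⟩ else 0

/-- f̄_T(x) = −Ψ(1)Φ(x_1) + Σ_{i=2}^T [Ψ(−x_{i−1})Φ(−x_i) − Ψ(x_{i−1})Φ(x_i)]. -/
noncomputable def fbar (T : ℕ) (x : Fin T → ℝ) : ℝ :=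
  -(Psi 1 * Phi (pad T x 0)) +
    ∑ i ∈ Finset.Ico 1 T,
      (Psi (-(pad T x (i-1))) * Phi (-(pad T x i)) - Psi (pad T x (i-1)) * Phi (pad T x i))

/-- f̄_T viewed as a function on Euclidean space ℝ^T. -/
noncomputable def fbarE (T : ℕ) (x : EuclideanSpace ℝ (Fin T)) : ℝ :=
  fbar T (fun i => x i)


noncomputable def PhiD (c : ℝ) : ℝ := Real.sqrt (Real.exp 1) * Real.exp (-c^2/2)

lemma psi_eq (x : ℝ) : Psi x = Real.exp 1 * expNegInvGlue ((2*x - 1) * |2*x - 1|) := by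
  unfold Psi
  by_cases h : x ≤ 1/2
  · rw [if_pos h, expNegInvGlue.zero_of_nonpos (mul_nonpos_of_nonpos_of_nonneg (by linarith) (abs_nonneg _))]
    ring
  · push_neg at h
    have h2 : (0:ℝ) < 2*x - 1 := by linarith
    rw [if_neg (not_le.2 h), abs_of_pos h2]
    have hp : (0:ℝ) < (2*x-1) * (2*x-1) := mul_pos h2 h2
    rw [expNegInvGlue, if_neg (not_le.2 hp), ← Real.exp_add]
    congr 1
    rw [← inv_eq_one_div]
    field_simp
    ring

lemma absmul_hasDerivAt (a : ℝ) : HasDerivAt (fun t : ℝ => t * |t|) (2 * |a|) a := by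
  rcases lt_trichotomy a 0 with h | h | h
  · have : HasDerivAt (fun t : ℝ => -(t * t)) (2 * |a|) a := by
      rw [abs_of_neg h]
      exact ((hasDerivAt_id a).mul (hasDerivAt_id a)).neg.congr_deriv (by simp only [id]; ring)
    refine this.congr_of_eventuallyEq ?_
    filter_upwards [eventually_lt_nhds h] with t ht
    rw [abs_of_neg ht]; ring
  · subst h
    rw [hasDerivAt_iff_tendsto_slope]
    have : (slope (fun t : ℝ => t * |t|) 0) =ᶠ[nhdsWithin 0 {(0:ℝ)}ᶜ] fun t => |t| := by
      filter_upwards [self_mem_nhdsWithin] with t ht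
      simp only [Set.mem_compl_iff, Set.mem_singleton_iff] at ht
      rw [slope_def_field]
      field_simp
      ring
    rw [Filter.tendsto_congr' this]
    have h2 := (continuous_abs.tendsto (0:ℝ)).mono_left (nhdsWithin_le_nhds (s := {(0:ℝ)}ᶜ))
    simpa using h2
  · have : HasDerivAt (fun t : ℝ => t * t) (2 * |a|) a := by
      rw [abs_of_pos h]
      exact ((hasDerivAt_id a).mul (hasDerivAt_id a)).congr_deriv (by simp [id]; ring)
    refine this.congr_of_eventuallyEq ?_
    filter_upwards [eventually_gt_nhds h] with t ht
    rw [abs_of_pos ht]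

lemma psi_hasDerivAt (a : ℝ) : HasDerivAt Psi (deriv Psi a) a := by
  have hg : HasDerivAt (fun x : ℝ => (2*x - 1) * |2*x - 1|) (2 * |2*a - 1| * 2) a := by
    have h1 : HasDerivAt (fun x : ℝ => 2*x - 1) 2 a := by
      simpa using ((hasDerivAt_id a).const_mul 2).sub_const 1
    exact (absmul_hasDerivAt (2*a - 1)).comp a h1
  have he : HasDerivAt expNegInvGlue (deriv expNegInvGlue ((2*a-1) * |2*a-1|)) ((2*a-1) * |2*a-1|) :=
    ((expNegInvGlue.contDiff (n := 1)).differentiable (by norm_num)).differentiableAt.hasDerivAt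
  have h : HasDerivAt Psi
      (Real.exp 1 * (deriv expNegInvGlue ((2*a-1) * |2*a-1|) * (2 * |2*a - 1| * 2))) a := by
    have := ((he.comp a hg).const_mul (Real.exp 1))
    refine HasDerivAt.congr_of_eventuallyEq ?_ (Filter.Eventually.of_forall psi_eq)
    simpa [mul_assoc] using this
  rw [h.deriv]; exact h

lemma psi_mono : Monotone Psi := by
  intro u v huv
  unfold Psi
  by_cases hv : v ≤ 1/2
  · rw [if_pos (le_trans huv hv), if_pos hv]
  · rw [if_neg hv]
    by_cases hu : u ≤ 1/2
    · rw [if_pos hu]; positivity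
    · rw [if_neg hu]
      push_neg at hu hv
      apply Real.exp_le_exp.2
      have h1 : (0:ℝ) < 2*u - 1 := by linarith
      have h2 : (0:ℝ) < 2*v - 1 := by linarith
      have : (2*u-1)^2 ≤ (2*v-1)^2 := by nlinarith
      have := one_div_le_one_div_of_le (by positivity) this
      linarith

lemma psi_nonneg (x : ℝ) : 0 ≤ Psi x := by
  unfold Psi; split
  · exact le_refl _
  · positivity

lemma psi_one : Psi 1 = 1 := by
  unfold Psi; norm_num

lemma psi_deriv_nonneg (a : ℝ) : 0 ≤ deriv Psi a := by
  have h := (psi_hasDerivAt a).hasDerivWithinAt (s := Set.Ioi a)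
  rw [hasDerivWithinAt_iff_tendsto_slope,
    Set.diff_singleton_eq_self (by simp)] at h
  refine ge_of_tendsto h ?_
  filter_upwards [self_mem_nhdsWithin] with b hb
  rw [slope_def_field]
  have hb' : a < b := hb
  exact div_nonneg (by linarith [psi_mono hb'.le]) (by linarith)

lemma gauss_integrable : MeasureTheory.Integrable (fun t : ℝ => Real.exp (-t^2/2)) := by
  have := integrable_exp_neg_mul_sq (b := (1/2:ℝ)) (by norm_num)
  refine this.congr ?_
  filter_upwards with t
  ring_nf

lemma phi_hasDerivAt (a : ℝ) : HasDerivAt Phi (PhiD a) a := by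
  unfold PhiD
  set f : ℝ → ℝ := fun t => Real.exp (-t^2/2) with hf
  have hfc : Continuous f := by fun_prop
  have key : ∀ x : ℝ, Phi x =
      Real.sqrt (Real.exp 1) * ((∫ t in Set.Iic (0:ℝ), f t) + ∫ t in (0:ℝ)..x, f t) := by
    intro x
    unfold Phi
    congr 1
    rw [← intervalIntegral.integral_Iic_sub_Iic (gauss_integrable.integrableOn)
      (gauss_integrable.integrableOn)]
    ring
  have hint : HasDerivAt (fun x : ℝ => ∫ t in (0:ℝ)..x, f t) (f a) a := by
    refine intervalIntegral.integral_hasDerivAt_right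
      (gauss_integrable.intervalIntegrable)
      (hfc.stronglyMeasurableAtFilter _ _) hfc.continuousAt
  have h := ((hint.const_add (∫ t in Set.Iic (0:ℝ), f t)).const_mul (Real.sqrt (Real.exp 1)))
  refine h.congr_of_eventuallyEq (Filter.Eventually.of_forall fun x => ?_)
  rw [key x]

lemma phi_nonneg (x : ℝ) : 0 ≤ Phi x := by
  unfold Phi
  apply mul_nonneg (Real.sqrt_nonneg _)
  apply MeasureTheory.integral_nonneg
  intro t
  positivity

lemma phiD_gt_one {a : ℝ} (ha : |a| < 1) : 1 < PhiD a := by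
  unfold PhiD
  rw [← Real.exp_half, ← Real.exp_add]
  have h2 : a^2 < 1 := by
    have := abs_nonneg a
    nlinarith [sq_abs a]
  calc (1:ℝ) = Real.exp 0 := Real.exp_zero.symm
    _ < _ := Real.exp_lt_exp.2 (by linarith)

lemma phiD_pos (a : ℝ) : 0 < PhiD a := by
  unfold PhiD
  rw [← Real.exp_half, ← Real.exp_add]; positivity

lemma phiD_neg (c : ℝ) : PhiD (-c) = PhiD c := by unfold PhiD; rw [neg_sq]

lemma psi_diff : Differentiable ℝ Psi := fun a => (psi_hasDerivAt a).differentiableAt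
lemma phi_diff : Differentiable ℝ Phi := fun a => (phi_hasDerivAt a).differentiableAt

lemma pad_diff (T m : ℕ) :
    Differentiable ℝ (fun x : EuclideanSpace ℝ (Fin T) => pad T (fun i => x i) m) := by
  unfold pad
  by_cases h : m < T
  · simp only [dif_pos h]
    exact (EuclideanSpace.proj (𝕜 := ℝ) (⟨m, h⟩ : Fin T)).differentiable
  · simp only [dif_neg h]
    exact differentiable_const 0

lemma fbarE_diff (T : ℕ) : Differentiable ℝ (fbarE T) := by
  unfold fbarE fbar
  apply Differentiable.add
  · exact ((phi_diff.comp (pad_diff T 0)).const_mul (Psi 1)).neg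
  · apply Differentiable.fun_sum
    intro k _
    exact ((psi_diff.comp (pad_diff T (k-1)).neg).mul
        (phi_diff.comp (pad_diff T k).neg)).sub
      ((psi_diff.comp (pad_diff T (k-1))).mul (phi_diff.comp (pad_diff T k)))

/-- If `|x_i| < 1` for some coordinate `i`, then there is `j ≤ i` with `|x_j| < 1` and
`|∂f̄_T/∂x_j(x)| > 1`; in particular `‖∇f̄_T(x)‖ > 1`. -/
theorem stmt9 (T : ℕ) (hT : 1 ≤ T) (x : EuclideanSpace ℝ (Fin T)) (i : Fin T)
    (hi : |x i| < 1) :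
    (∃ j : Fin T, (j : ℕ) ≤ (i : ℕ) ∧ |x j| < 1 ∧
      1 < |fderiv ℝ (fbarE T) x (EuclideanSpace.single j 1)|) ∧
    1 < ‖gradient (fbarE T) x‖ := by
  classical
  have hex : ∃ k : ℕ, ∃ h : k < T, |x ⟨k, h⟩| < 1 := ⟨(i : ℕ), i.isLt, by simpa using hi⟩
  obtain ⟨hjT, hjx⟩ := Nat.find_spec hex
  set jn := Nat.find hex with hjn
  set j : Fin T := ⟨jn, hjT⟩ with hj
  have hji : jn ≤ (i : ℕ) := Nat.find_min' hex ⟨i.isLt, by simpa using hi⟩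
  have hmin : ∀ m : ℕ, m < jn → ∀ h : m < T, 1 ≤ |x ⟨m, h⟩| := by
    intro m hm h
    by_contra hc
    push_neg at hc
    exact Nat.find_min hex hm ⟨h, hc⟩
  set a : ℝ := x j with ha
  have haj : |a| < 1 := hjx
  set p : ℕ → ℝ := pad T (fun k => x k) with hp
  set v : EuclideanSpace ℝ (Fin T) := EuclideanSpace.single j (1:ℝ) with hv
  set e : ℕ → ℝ := fun m => if m = jn then (1:ℝ) else 0 with he
  have hpj : p jn = a := by
    simp only [hp]; unfold pad; rw [dif_pos hjT]
  -- coordinate formula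
  have hpad : ∀ s : ℝ, ∀ m : ℕ, pad T (fun k => (x + s • v) k) m = p m + s * e m := by
    intro s m
    by_cases h : m < T
    · have h1 : (x + s • v) ⟨m, h⟩ = x ⟨m, h⟩ + s * (if (⟨m, h⟩ : Fin T) = j then 1 else 0) := by
        simp [hv, EuclideanSpace.single_apply, smul_eq_mul]
      have h2 : ((⟨m, h⟩ : Fin T) = j) ↔ (m = jn) := by
        rw [hj, Fin.mk.injEq]
      show pad T (fun k => (x + s • v) k) m = p m + s * e m
      simp only [hp, he]
      unfold pad
      rw [dif_pos h, dif_pos h]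
      beta_reduce
      rw [h1]
      by_cases hm : m = jn
      · rw [if_pos (h2.2 hm), if_pos hm]
      · rw [if_neg (fun hc => hm (h2.1 hc)), if_neg hm]
    · have hm : m ≠ jn := fun hc => h (hc ▸ hjT)
      show pad T (fun k => (x + s • v) k) m = p m + s * e m
      simp only [hp, he, if_neg hm]
      unfold pad
      rw [dif_neg h, dif_neg h]
      ring
  -- derivative of coordinates
  have hQd : ∀ m : ℕ, HasDerivAt (fun s : ℝ => p m + s * e m) (e m) 0 := by
    intro m
    simpa using ((hasDerivAt_id (0:ℝ)).mul_const (e m)).const_add (p m)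
  -- per-term derivatives
  set d : ℕ → ℝ := fun k =>
    (deriv Psi (-(p (k-1))) * (-(e (k-1)))) * Phi (-(p k))
      + Psi (-(p (k-1))) * (PhiD (p k) * (-(e k)))
      - ((deriv Psi (p (k-1)) * e (k-1)) * Phi (p k)
        + Psi (p (k-1)) * (PhiD (p k) * e k)) with hd
  have hterm : ∀ k : ℕ, HasDerivAt (fun s : ℝ =>
      Psi (-(p (k-1) + s * e (k-1))) * Phi (-(p k + s * e k))
        - Psi (p (k-1) + s * e (k-1)) * Phi (p k + s * e k)) (d k) 0 := by
    intro k
    have h1 : HasDerivAt (fun s : ℝ => Psi (-(p (k-1) + s * e (k-1))))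
        (deriv Psi (-(p (k-1))) * (-(e (k-1)))) 0 := by
      have hneg : HasDerivAt (fun s : ℝ => -(p (k-1) + s * e (k-1))) (-(e (k-1))) 0 :=
        (hQd (k-1)).neg
      have := (psi_hasDerivAt (-(p (k-1) + 0 * e (k-1)))).comp 0 hneg
      simpa [Function.comp_def] using this
    have h2 : HasDerivAt (fun s : ℝ => Phi (-(p k + s * e k)))
        (PhiD (p k) * (-(e k))) 0 := by
      have hneg : HasDerivAt (fun s : ℝ => -(p k + s * e k)) (-(e k)) 0 := (hQd k).neg
      have := (phi_hasDerivAt (-(p k + 0 * e k))).comp 0 hneg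
      simpa [Function.comp_def, phiD_neg] using this
    have h3 : HasDerivAt (fun s : ℝ => Psi (p (k-1) + s * e (k-1)))
        (deriv Psi (p (k-1)) * e (k-1)) 0 := by
      have := (psi_hasDerivAt (p (k-1) + 0 * e (k-1))).comp 0 (hQd (k-1))
      simpa [Function.comp_def] using this
    have h4 : HasDerivAt (fun s : ℝ => Phi (p k + s * e k)) (PhiD (p k) * e k) 0 := by
      have := (phi_hasDerivAt (p k + 0 * e k)).comp 0 (hQd k)
      simpa [Function.comp_def] using this
    have hres := (h1.fun_mul h2).fun_sub (h3.fun_mul h4)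
    refine hres.congr_deriv ?_
    simp only [hd]
    norm_num
  have hlead : HasDerivAt (fun s : ℝ => -(Psi 1 * Phi (p 0 + s * e 0)))
      (-(Psi 1 * (PhiD (p 0) * e 0))) 0 := by
    have h4 : HasDerivAt (fun s : ℝ => Phi (p 0 + s * e 0)) (PhiD (p 0) * e 0) 0 := by
      have := (phi_hasDerivAt (p 0 + 0 * e 0)).comp 0 (hQd 0)
      simpa [Function.comp_def] using this
    exact (h4.const_mul (Psi 1)).neg
  set D : ℝ := -(Psi 1 * (PhiD (p 0) * e 0)) + ∑ k ∈ Finset.Ico 1 T, d k with hD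
  have hG : HasDerivAt (fun s : ℝ => fbarE T (x + s • v)) D 0 := by
    have hsum : HasDerivAt (fun s : ℝ => ∑ k ∈ Finset.Ico 1 T,
        (Psi (-(p (k-1) + s * e (k-1))) * Phi (-(p k + s * e k))
          - Psi (p (k-1) + s * e (k-1)) * Phi (p k + s * e k)))
        (∑ k ∈ Finset.Ico 1 T, d k) 0 := HasDerivAt.fun_sum (fun k _ => hterm k)
    have h := hlead.fun_add hsum
    refine h.congr_of_eventuallyEq (Filter.Eventually.of_forall fun s => ?_)
    show fbarE T (x + s • v) = _
    unfold fbarE fbar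
    simp only [hpad]
  -- identify fderiv
  have hdiff : DifferentiableAt ℝ (fbarE T) x := (fbarE_diff T).differentiableAt
  have hL : HasDerivAt (fun s : ℝ => x + s • v) v 0 := by
    simpa using ((hasDerivAt_id (0:ℝ)).smul_const v).const_add x
  have hcomp : HasDerivAt (fun s : ℝ => fbarE T (x + s • v))
      (fderiv ℝ (fbarE T) x v) 0 := by
    have h0 : x + (0:ℝ) • v = x := by simp
    have hF : HasFDerivAt (fbarE T) (fderiv ℝ (fbarE T) x) ((fun s : ℝ => x + s • v) 0) := by
      rw [show (fun s : ℝ => x + s • v) 0 = x by simp]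
      exact hdiff.hasFDerivAt
    exact hF.comp_hasDerivAt 0 hL
  have hDval : fderiv ℝ (fbarE T) x v = D := hcomp.unique hG
  -- bound D
  have hphi_a : 1 < PhiD a := phiD_gt_one haj
  have hd_le : ∀ k ∈ Finset.Ico 1 T, d k ≤ if k = jn then -(PhiD a) else 0 := by
    intro k hk
    rw [Finset.mem_Ico] at hk
    by_cases hkj : k = jn
    · rw [if_pos hkj]
      have h1 : k - 1 ≠ jn := by omega
      have e1 : e (k-1) = 0 := by simp only [he]; rw [if_neg h1]
      have e2 : e k = 1 := by simp only [he]; rw [if_pos hkj]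
      have hq1 : jn - 1 < T := by omega
      have hq := hmin (jn - 1) (by omega) hq1
      have hpk1 : p (k-1) = x ⟨jn - 1, hq1⟩ := by
        simp only [hp, hkj]; unfold pad; rw [dif_pos hq1]
      have hpk : p k = a := by rw [hkj, hpj]
      set q : ℝ := p (k-1) with hqd
      have hsum1 : 1 ≤ Psi q + Psi (-q) := by
        rw [hpk1]
        rcases le_abs.1 hq with h | h
        · have := psi_mono h
          rw [psi_one] at this
          linarith [psi_nonneg (-(x ⟨jn - 1, hq1⟩))]
        · have := psi_mono h
          rw [psi_one] at this
          linarith [psi_nonneg (x ⟨jn - 1, hq1⟩)]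
      simp only [hd, e1, e2, hpk]
      have hP := phiD_pos a
      nlinarith [mul_le_mul_of_nonneg_right hsum1 hP.le]
    · rw [if_neg hkj]
      have e2 : e k = 0 := by simp only [he]; rw [if_neg hkj]
      have e1 : (0:ℝ) ≤ e (k-1) := by simp only [he]; split <;> norm_num
      simp only [hd, e2]
      have m1 : 0 ≤ deriv Psi (-(p (k-1))) * e (k-1) * Phi (-(p k)) :=
        mul_nonneg (mul_nonneg (psi_deriv_nonneg _) e1) (phi_nonneg _)
      have m2 : 0 ≤ deriv Psi (p (k-1)) * e (k-1) * Phi (p k) :=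
        mul_nonneg (mul_nonneg (psi_deriv_nonneg _) e1) (phi_nonneg _)
      nlinarith
  have hsum_le : ∑ k ∈ Finset.Ico 1 T, d k ≤
      ∑ k ∈ Finset.Ico 1 T, (if k = jn then -(PhiD a) else 0) := Finset.sum_le_sum hd_le
  rw [Finset.sum_ite_eq' (Finset.Ico 1 T) jn (fun _ => -(PhiD a))] at hsum_le
  have hD_le : D ≤ -(PhiD a) := by
    by_cases hj0 : jn = 0
    · have e0 : e 0 = 1 := by simp only [he]; rw [if_pos hj0.symm]
      have hp0 : p 0 = a := hj0 ▸ hpj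
      have hnotmem : jn ∉ Finset.Ico 1 T := by simp [hj0]
      rw [if_neg hnotmem] at hsum_le
      rw [hD, e0, hp0, psi_one]
      linarith
    · have e0 : e 0 = 0 := by simp only [he]; rw [if_neg (fun hc => hj0 hc.symm)]
      have hmem : jn ∈ Finset.Ico 1 T := by
        rw [Finset.mem_Ico]; exact ⟨by omega, hjT⟩
      rw [if_pos hmem] at hsum_le
      rw [hD, e0]
      simp only [mul_zero, neg_zero, zero_add]
      linarith
  have hDlt : D < -1 := lt_of_le_of_lt hD_le (by linarith)
  have habs : 1 < |D| := lt_abs.2 (Or.inr (by linarith))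
  constructor
  · exact ⟨j, hji, haj, by rw [hDval]; exact habs⟩
  · have hinner : @inner ℝ _ _ (gradient (fbarE T) x) v = fderiv ℝ (fbarE T) x v :=
      InnerProductSpace.toDual_symm_apply
    have hnv : ‖v‖ = 1 := by rw [hv]; simp [EuclideanSpace.norm_single]
    have hle : |fderiv ℝ (fbarE T) x v| ≤ ‖gradient (fbarE T) x‖ := by
      rw [← hinner]
      calc |@inner ℝ _ _ (gradient (fbarE T) x) v|
          ≤ ‖gradient (fbarE T) x‖ * ‖v‖ := abs_real_inner_le_norm _ _
        _ = ‖gradient (fbarE T) x‖ := by rw [hnv, mul_one]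
    rw [hDval] at hle
    linarith
end

section
/- Let T ≥ 1 be an integer and define h̄_T : ℝ^T → ℝ by h̄_T(x) = Ψ(1 − (25/2)·‖x − (4/5)e^{(T)}‖²), where e^{(T)} is the T-th standard basis vector. Then: (i) h̄_T((4/5)e^{(T)}) = 1 and 0 ≤ h̄_T(x) ≤ 1 for all x; (ii) h̄_T(x) = 0 for every x with x_T ≤ 3/5 or ‖x‖ ≥ 1; and (iii) there exists a numerical constant c < ∞, independent of T and p, such that for every integer p ≥ 1 the p-th order derivatives of h̄_T are exp(3p·log p + c·p)-Lipschitz continuous. -/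
/-- The bump function h̄_T(x) = Ψ(1 − (25/2)·‖x − (4/5)e^{(T)}‖²), where `e^{(T)}` is the
last standard basis vector of ℝ^T. -/
noncomputable def hbar (T : ℕ) (hT : 1 ≤ T) (x : EuclideanSpace ℝ (Fin T)) : ℝ :=
  Psi (1 - (25/2) * ‖x - (4/5 : ℝ) • EuclideanSpace.single ⟨T-1, by omega⟩ 1‖^2)

/-- The directional projection `t ↦ g(x + t·v)`. -/
noncomputable def dirFun {n : ℕ} (g : EuclideanSpace ℝ (Fin n) → ℝ)
    (x v : EuclideanSpace ℝ (Fin n)) (t : ℝ) : ℝ :=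
  g (x + t • v)

/-- `g` has `L`-Lipschitz `p`th order derivatives. -/
def HasLipschitzDerivs {n : ℕ} (p : ℕ) (L : ℝ) (g : EuclideanSpace ℝ (Fin n) → ℝ) : Prop :=
  ∀ x v : EuclideanSpace ℝ (Fin n), ‖v‖ = 1 → ∀ t t' : ℝ,
    |iteratedDeriv p (dirFun g x v) t - iteratedDeriv p (dirFun g x v) t'| ≤ L * |t - t'|

open Finset RealInnerProductSpace

noncomputable def qc : ℕ → ℕ → ℝ
  | 0, m => if m = 0 then 1 else 0
  | (k+1), m => (if 3 ≤ m then 2 * qc k (m-3) else 0)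
      - (if m = 0 then 0 else ((m:ℝ) - 1) * qc k (m-1))

lemma qc_support : ∀ k m, 3*k < m → qc k m = 0 := by
  intro k
  induction k with
  | zero => intro m hm; simp [qc]; omega
  | succ k ih =>
    intro m hm
    simp only [qc]
    rw [ih (m-3) (by omega)]
    rcases Nat.eq_zero_or_pos m with h0 | h0
    · omega
    · rw [ih (m-1) (by omega)]; simp

lemma qc_reindex (k : ℕ) (u : ℝ) :
    ∑ m ∈ range (3*k+4), qc (k+1) m * u^m
      = ∑ m ∈ range (3*k+1), qc k m * (2*u^(m+3) - m*u^(m+1)) := by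
  have hS1 : ∑ m ∈ range (3*k+4), (if 3 ≤ m then 2 * qc k (m-3) else 0) * u^m
      = ∑ m ∈ range (3*k+1), 2 * qc k m * u^(m+3) := by
    rw [show 3*k+4 = (3*k+1)+1+1+1 by ring]
    rw [Finset.sum_range_succ' (fun m => (if 3 ≤ m then 2 * qc k (m-3) else 0) * u^m)]
    rw [Finset.sum_range_succ' (fun m => (if 3 ≤ m+1 then 2 * qc k (m+1-3) else 0) * u^(m+1))]
    rw [Finset.sum_range_succ' (fun m => (if 3 ≤ m+1+1 then 2 * qc k (m+1+1-3) else 0) * u^(m+1+1))]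
    norm_num
    apply Finset.sum_congr rfl
    intro m _
    simp only [show m+1+1+1-3 = m from by omega, show m+1+1+1 = m+3 from by omega]
  have hS2 : ∑ m ∈ range (3*k+4), (if m = 0 then 0 else ((m:ℝ) - 1) * qc k (m-1)) * u^m
      = ∑ m ∈ range (3*k+1), (m:ℝ) * qc k m * u^(m+1) := by
    rw [show 3*k+4 = (3*k+3)+1 by ring]
    rw [Finset.sum_range_succ' (fun m => (if m = 0 then 0 else ((m:ℝ) - 1) * qc k (m-1)) * u^m)]
    simp only [Nat.succ_ne_zero, if_false, Nat.add_sub_cancel, if_pos rfl, zero_mul, add_zero]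
    rw [show 3*k+3 = (3*k+1)+1+1 by ring]
    rw [Finset.sum_range_succ, Finset.sum_range_succ]
    rw [qc_support k (3*k+1) (by omega), qc_support k (3*k+1+1) (by omega)]
    simp only [mul_zero, zero_mul, add_zero]
    norm_num
  have expand : ∀ m ∈ range (3*k+4), qc (k+1) m * u^m
      = (if 3 ≤ m then 2 * qc k (m-3) else 0) * u^m
        - (if m = 0 then 0 else ((m:ℝ) - 1) * qc k (m-1)) * u^m := by
    intro m _; rw [show qc (k+1) m = (if 3 ≤ m then 2 * qc k (m-3) else 0)
      - (if m = 0 then 0 else ((m:ℝ) - 1) * qc k (m-1)) from rfl]; ring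
  rw [Finset.sum_congr rfl expand, Finset.sum_sub_distrib, hS1, hS2,
    ← Finset.sum_sub_distrib]
  apply Finset.sum_congr rfl
  intro m _
  ring

noncomputable def Pval (k : ℕ) (u : ℝ) : ℝ := ∑ m ∈ range (3*k+1), qc k m * u^m

noncomputable def Ff (k : ℕ) (w : ℝ) : ℝ := Real.exp (1 - (w⁻¹)^2) * Pval k w⁻¹

lemma Ff_hasDerivAt (k : ℕ) {w : ℝ} (hw : w ≠ 0) :
    HasDerivAt (Ff k) (Ff (k+1) w) w := by
  set u := w⁻¹ with hu
  -- derivative of u = 1/w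
  have hinv : HasDerivAt (fun y : ℝ => y⁻¹) (-(w^2)⁻¹) w := hasDerivAt_inv hw
  have hneg : (-(w^2)⁻¹) = -(u^2) := by rw [hu, inv_pow]
  -- derivative of each monomial (1/w)^m : equals -(m:ℝ) * u^(m+1)
  have hmon : ∀ m : ℕ, HasDerivAt (fun y : ℝ => (y⁻¹)^m) (-(m:ℝ) * u^(m+1)) w := by
    intro m
    have h := (hinv.pow m)
    refine h.congr_deriv (Eq.symm ?_)
    rw [hneg]
    rcases Nat.eq_zero_or_pos m with h0 | h0
    · subst h0; simp
    · have : u ^ (m-1) * u^2 = u^(m+1) := by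
        rw [← pow_add]; congr 1; omega
      rw [← this]; ring
  -- derivative of the exponential factor: exp(1-u²) * 2u³
  have hexp : HasDerivAt (fun y : ℝ => Real.exp (1 - (y⁻¹)^2))
      (Real.exp (1 - u^2) * (2 * u^3)) w := by
    have h1 : HasDerivAt (fun y : ℝ => 1 - (y⁻¹)^2) (2 * u^3) w := by
      have := (hmon 2).const_sub 1
      refine this.congr_deriv (Eq.symm ?_)
      have : u^(2+1) = u^3 := rfl
      rw [this]; ring
    exact (Real.hasDerivAt_exp (1 - u^2)).comp w h1
  -- derivative of Pval k ∘ inv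
  have hP : HasDerivAt (fun y : ℝ => Pval k y⁻¹)
      (∑ m ∈ range (3*k+1), qc k m * (-(m:ℝ) * u^(m+1))) w := by
    apply HasDerivAt.fun_sum
    intro m _
    exact (hmon m).const_mul (qc k m)
  have hprod := hexp.mul hP
  refine hprod.congr_deriv (Eq.symm ?_)
  show Real.exp (1 - u^2) * Pval (k+1) u = _
  have : Pval (k+1) u = ∑ m ∈ range (3*k+1), qc k m * (2*u^(m+3) - m*u^(m+1)) := by
    rw [Pval, show 3*(k+1)+1 = 3*k+4 by ring]; exact qc_reindex k u
  rw [this, Pval]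
  rw [Finset.mul_sum, Finset.mul_sum, Finset.mul_sum, ← Finset.sum_add_distrib]
  apply Finset.sum_congr rfl
  intro m _
  have : u^(m+3) = u^m * u^3 := by rw [pow_add]
  rw [this]
  ring

/-- ℓ¹ norm of coefficients -/
noncomputable def Sq (k : ℕ) : ℝ := ∑ m ∈ range (3*k+1), |qc k m|

lemma Sq_nonneg (k : ℕ) : 0 ≤ Sq k := Finset.sum_nonneg fun m _ => abs_nonneg _

lemma Sq_step (k : ℕ) : Sq (k+1) ≤ (3*(k:ℝ)+3) * Sq k := by
  rw [Sq, show 3*(k+1)+1 = 3*k+4 by ring]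
  have hterm : ∀ m ∈ range (3*k+4), |qc (k+1) m|
      ≤ (if 3 ≤ m then 2 * |qc k (m-3)| else 0)
        + (if m = 0 then 0 else (m:ℝ) * |qc k (m-1)|) := by
    intro m _
    rw [show qc (k+1) m = (if 3 ≤ m then 2 * qc k (m-3) else 0)
      - (if m = 0 then 0 else ((m:ℝ) - 1) * qc k (m-1)) from rfl]
    refine (abs_sub _ _).trans (add_le_add ?_ ?_)
    · split
      · rw [abs_mul]; simp [abs_of_nonneg]
      · simp
    · split
      · simp
      · rename_i hm0
        rw [abs_mul]
        have hm1 : (1:ℝ) ≤ (m:ℝ) := by exact_mod_cast Nat.one_le_iff_ne_zero.2 hm0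
        have habs : |(m:ℝ)-1| = (m:ℝ)-1 := abs_of_nonneg (by linarith)
        rw [habs]
        exact mul_le_mul_of_nonneg_right (by linarith) (abs_nonneg _)
  refine (Finset.sum_le_sum hterm).trans ?_
  rw [Finset.sum_add_distrib]
  have hA : ∑ m ∈ range (3*k+4), (if 3 ≤ m then 2 * |qc k (m-3)| else 0)
      = 2 * Sq k := by
    rw [show 3*k+4 = (3*k+1)+1+1+1 by ring]
    rw [Finset.sum_range_succ' (fun m => (if 3 ≤ m then 2 * |qc k (m-3)| else 0))]
    rw [Finset.sum_range_succ' (fun m => (if 3 ≤ m+1 then 2 * |qc k (m+1-3)| else 0))]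
    rw [Finset.sum_range_succ' (fun m => (if 3 ≤ m+1+1 then 2 * |qc k (m+1+1-3)| else 0))]
    norm_num
    rw [Sq, Finset.mul_sum]
    apply Finset.sum_congr rfl
    intro m _
    simp [show m+1+1+1-3 = m from by omega]
  have hB : ∑ m ∈ range (3*k+4), (if m = 0 then 0 else (m:ℝ) * |qc k (m-1)|)
      ≤ (3*(k:ℝ)+1) * Sq k := by
    rw [show 3*k+4 = (3*k+3)+1 by ring]
    rw [Finset.sum_range_succ' (fun m => (if m = 0 then 0 else (m:ℝ) * |qc k (m-1)|))]
    simp only [Nat.succ_ne_zero, if_false, Nat.add_sub_cancel, if_pos rfl, add_zero]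
    norm_num
    push_cast
    have h1 : ∀ m ∈ range (3*k+3), ((m:ℝ)+1) * |qc k m| ≤ (3*(k:ℝ)+1) * |qc k m| := by
      intro m _
      rcases le_or_gt m (3*k) with hm | hm
      · apply mul_le_mul_of_nonneg_right _ (abs_nonneg _)
        have : (m:ℝ) ≤ 3*k := by exact_mod_cast hm
        linarith
      · rw [qc_support k m hm]; simp
    refine (Finset.sum_le_sum (by intro m hm; push_cast; exact h1 m hm)).trans ?_
    rw [← Finset.mul_sum]
    apply mul_le_mul_of_nonneg_left _ (by positivity)
    rw [show 3*k+3 = (3*k+1)+1+1 by ring]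
    rw [Finset.sum_range_succ, Finset.sum_range_succ]
    rw [qc_support k (3*k+1) (by omega), qc_support k (3*k+1+1) (by omega)]
    simp [Sq]
  rw [hA]
  have := Sq_nonneg k
  linarith

lemma Sq_bound : ∀ k, Sq k ≤ 4^k * (Nat.factorial k) := by
  intro k
  induction k with
  | zero => simp [Sq, qc]
  | succ k ih =>
    refine (Sq_step k).trans ?_
    have h1 : (3*(k:ℝ)+3) ≤ 4*((k:ℝ)+1) := by linarith
    have h2 : (3*(k:ℝ)+3) * Sq k ≤ 4*((k:ℝ)+1) * (4^k * (Nat.factorial k)) := by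
      apply mul_le_mul h1 ih (Sq_nonneg k) (by positivity)
    refine h2.trans ?_
    rw [Nat.factorial_succ]
    push_cast
    ring_nf
    linarith

/-- Coefficients of the two-term Faà di Bruno expansion for composition with a
quadratic whose second derivative is `-50`. -/
noncomputable def ac : ℕ → ℕ → ℝ
  | 0, i => if i = 0 then 1 else 0
  | (n+1), i => ac n i + (-50) * ((n:ℝ) + 2 - 2*i) * (if 1 ≤ i then ac n (i-1) else 0)

lemma ac_support : ∀ n i, n < 2*i → ac n i = 0 := by
  intro n
  induction n with
  | zero => intro i hi; simp [ac]; omega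
  | succ n ih =>
    intro i hi
    simp only [ac]
    rw [ih i (by omega)]
    rcases Nat.lt_or_ge n (2*(i-1)) with h | h
    · rw [show (if 1 ≤ i then ac n (i-1) else 0) = if 1 ≤ i then 0 else 0 by
        split <;> [rw [ih (i-1) h]; rfl]]
      simp
    · -- here 2(i-1) ≤ n < 2i - 1, so n = 2i - 2 and the factor n+2-2i = 0
      have hi1 : 1 ≤ i := by omega
      have : ((n:ℝ) + 2 - 2*i) = 0 := by
        have : n + 2 = 2*i := by omega
        have h2 : ((n:ℝ) + 2) = 2*(i:ℝ) := by exact_mod_cast this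
        linarith
      rw [this]
      ring

lemma ac_abs_bound : ∀ n i, |ac n i| ≤ 2^n * (50*((n:ℝ)+1))^i := by
  intro n
  induction n with
  | zero =>
    intro i
    simp only [ac]
    split
    · subst ‹i = 0›; norm_num
    · rw [abs_zero]; positivity
  | succ n ih =>
    intro i
    simp only [ac]
    have hC1 : (0:ℝ) ≤ 50*((n:ℝ)+1) := by positivity
    have hC2 : (50:ℝ)*((n:ℝ)+1) ≤ 50*((n:ℝ)+2) := by linarith
    have h2 : |(-50) * ((n:ℝ) + 2 - 2*i) * (if 1 ≤ i then ac n (i-1) else 0)|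
        ≤ 2^n * (50*((n:ℝ)+2))^i := by
      rcases le_or_gt 1 i with hi | hi
      · rw [if_pos hi]
        rcases le_or_gt (2*(i-1)) n with hsupp | hsupp
        · have hfac : |(-50) * ((n:ℝ) + 2 - 2*i)| ≤ 50*((n:ℝ)+2) := by
            rw [abs_mul, abs_neg, abs_of_nonneg (by norm_num : (0:ℝ) ≤ 50)]
            have h2i : (2:ℝ)*(i:ℝ) ≤ (n:ℝ)+2 := by
              have : 2*i ≤ n + 2 := by omega
              exact_mod_cast this
            have h2i0 : (0:ℝ) ≤ 2*(i:ℝ) := by positivity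
            rw [abs_of_nonneg (by linarith)]
            nlinarith
          calc |(-50) * ((n:ℝ) + 2 - 2*i) * ac n (i-1)|
              = |(-50) * ((n:ℝ) + 2 - 2*i)| * |ac n (i-1)| := abs_mul _ _
            _ ≤ (50*((n:ℝ)+2)) * (2^n * (50*((n:ℝ)+1))^(i-1)) := by
                exact mul_le_mul hfac (ih (i-1)) (abs_nonneg _) (by positivity)
            _ ≤ (50*((n:ℝ)+2)) * (2^n * (50*((n:ℝ)+2))^(i-1)) := by gcongr
            _ = 2^n * ((50*((n:ℝ)+2)) * (50*((n:ℝ)+2))^(i-1)) := by ring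
            _ = 2^n * (50*((n:ℝ)+2))^i := by
                rw [← pow_succ']
                congr 2
                omega
        · rw [ac_support n (i-1) hsupp]
          rw [mul_zero, abs_zero]
          positivity
      · rw [if_neg (by omega)]
        rw [mul_zero, abs_zero]
        positivity
    refine (abs_add_le _ _).trans ?_
    have h1 : |ac n i| ≤ 2^n * (50*((n:ℝ)+2))^i := by
      refine (ih i).trans ?_
      gcongr
    have hgoal : (2:ℝ)^(n+1) * (50*(((n+1:ℕ):ℝ)+1))^i
        = 2^n * (50*((n:ℝ)+2))^i + 2^n * (50*((n:ℝ)+2))^i := by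
      push_cast
      ring
    rw [hgoal]
    linarith

/-- `x^m ≤ m! * exp x` for `x ≥ 0`. -/
lemma pow_le_factorial_mul_exp (x : ℝ) (hx : 0 ≤ x) (m : ℕ) :
    x^m ≤ (Nat.factorial m) * Real.exp x := by
  have h := Real.sum_le_exp_of_nonneg hx (m+1)
  have hterm : x^m / (Nat.factorial m) ≤ ∑ i ∈ range (m+1), x^i / (Nat.factorial i) := by
    apply Finset.single_le_sum (f := fun i => x^i / (Nat.factorial i))
    · intro i _; positivity
    · simp
  have hfac : (0:ℝ) < (Nat.factorial m) := by exact_mod_cast Nat.factorial_pos m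
  rw [div_le_iff₀ hfac] at *
  calc x^m ≤ (∑ i ∈ range (m+1), x^i / (Nat.factorial i)) * (Nat.factorial m) := by
        apply hterm
    _ ≤ Real.exp x * (Nat.factorial m) := by
        apply mul_le_mul_of_nonneg_right h (le_of_lt hfac)
    _ = (Nat.factorial m) * Real.exp x := by ring

lemma Ff_bound (k : ℕ) {w : ℝ} (h0 : 0 < w) (h1 : w ≤ 1) :
    |Ff k w| ≤ Real.exp 1 * (4^k * (Nat.factorial k)) * (Nat.factorial ((3*k+3)/2)) * w^2 := by
  set u := w⁻¹ with hu
  have hu1 : 1 ≤ u := (one_le_inv₀ h0).2 h1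
  have hu0 : 0 < u := lt_of_lt_of_le one_pos hu1
  have hP : |Pval k u| ≤ Sq k * u^(3*k) := by
    rw [Pval]
    refine (Finset.abs_sum_le_sum_abs _ _).trans ?_
    rw [Sq, Finset.sum_mul]
    apply Finset.sum_le_sum
    intro m hm
    rw [abs_mul, abs_pow, abs_of_pos hu0]
    apply mul_le_mul_of_nonneg_left _ (abs_nonneg _)
    apply pow_le_pow_right₀ hu1
    simp at hm; omega
  have hkey : Real.exp (-(u^2)) * u^(3*k) ≤ (Nat.factorial ((3*k+3)/2)) * w^2 := by
    have e1 : u^(3*k) = u^(3*k+2) * w^2 := by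
      have hiv : u^2 * w^2 = 1 := by
        rw [hu]; field_simp
      calc u^(3*k) = u^(3*k) * (u^2 * w^2) := by rw [hiv, mul_one]
        _ = u^(3*k+2) * w^2 := by rw [pow_add]; ring
    have e2 : u^(3*k+2) ≤ u^(2*((3*k+3)/2)) := by
      apply pow_le_pow_right₀ hu1
      omega
    have e3 : u^(2*((3*k+3)/2)) = (u^2)^((3*k+3)/2) := by
      rw [← pow_mul, Nat.mul_comm]
    have e4 : (u^2)^((3*k+3)/2) ≤ (Nat.factorial ((3*k+3)/2)) * Real.exp (u^2) :=
      pow_le_factorial_mul_exp _ (by positivity) _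
    have hw2 : (0:ℝ) ≤ w^2 := by positivity
    have hexp : (0:ℝ) < Real.exp (-(u^2)) := Real.exp_pos _
    calc Real.exp (-(u^2)) * u^(3*k)
        = Real.exp (-(u^2)) * u^(3*k+2) * w^2 := by rw [e1]; ring
      _ ≤ Real.exp (-(u^2)) * ((Nat.factorial ((3*k+3)/2)) * Real.exp (u^2)) * w^2 := by
          apply mul_le_mul_of_nonneg_right _ hw2
          apply mul_le_mul_of_nonneg_left _ (le_of_lt hexp)
          exact e2.trans (le_of_eq e3 |>.trans e4)
      _ = (Nat.factorial ((3*k+3)/2)) * w^2 := by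
          rw [Real.exp_neg]
          field_simp
  have hexp_eq : Real.exp (1 - u^2) = Real.exp 1 * Real.exp (-(u^2)) := by
    rw [← Real.exp_add]; ring_nf
  rw [Ff, abs_mul, Real.abs_exp, ← hu, hexp_eq]
  calc Real.exp 1 * Real.exp (-(u^2)) * |Pval k u|
      ≤ Real.exp 1 * Real.exp (-(u^2)) * (Sq k * u^(3*k)) := by
        apply mul_le_mul_of_nonneg_left hP (by positivity)
    _ = Real.exp 1 * Sq k * (Real.exp (-(u^2)) * u^(3*k)) := by ring
    _ ≤ Real.exp 1 * Sq k * ((Nat.factorial ((3*k+3)/2)) * w^2) := by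
        apply mul_le_mul_of_nonneg_left hkey
        exact mul_nonneg (le_of_lt (Real.exp_pos 1)) (Sq_nonneg k)
    _ ≤ Real.exp 1 * (4^k * (Nat.factorial k)) * ((Nat.factorial ((3*k+3)/2)) * w^2) := by
        apply mul_le_mul_of_nonneg_right _ (by positivity)
        apply mul_le_mul_of_nonneg_left (Sq_bound k) (le_of_lt (Real.exp_pos 1))
    _ = Real.exp 1 * (4^k * (Nat.factorial k)) * (Nat.factorial ((3*k+3)/2)) * w^2 := by ring

noncomputable def wf (d : ℝ) (s : ℝ) : ℝ := 1 - 25*s^2 - 25*d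

noncomputable def Gf (d : ℝ) (s : ℝ) : ℝ :=
  if 0 < wf d s then Real.exp (1 - ((wf d s)⁻¹)^2) else 0

noncomputable def gf (d : ℝ) (n : ℕ) (s : ℝ) : ℝ :=
  if 0 < wf d s then
    ∑ i ∈ range (n+1), ac n i * Ff (n-i) (wf d s) * (-50*s)^(n-2*i)
  else 0

lemma wf_hasDerivAt (d s : ℝ) : HasDerivAt (wf d) (-50*s) s := by
  have h : HasDerivAt (fun s : ℝ => 1 - 25*s^2 - 25*d) (-50*s) s := by
    have h1 : HasDerivAt (fun s : ℝ => s^2) (2*s) s := by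
      simpa using hasDerivAt_pow 2 s
    have := ((h1.const_mul 25).const_sub 1).sub_const (25*d)
    refine this.congr_deriv (Eq.symm ?_)
    ring
  exact h

lemma wf_cont (d : ℝ) : Continuous (wf d) := by
  unfold wf; fun_prop

lemma wf_facts {d s : ℝ} (hd : 0 ≤ d) (h : 0 < wf d s) :
    |s| ≤ 1/5 ∧ wf d s ≤ 1 ∧ |(-50)*s| ≤ 10 := by
  have h2 : 25*s^2 < 1 := by unfold wf at h; nlinarith
  have hs : |s| ≤ 1/5 := by
    rw [abs_le]
    constructor <;> nlinarith [sq_nonneg s]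
  refine ⟨hs, by unfold wf; nlinarith [sq_nonneg s], ?_⟩
  have habs : |(-50:ℝ)*s| = 50*|s| := by
    rw [abs_mul]; norm_num
  rw [habs]
  calc (50:ℝ) * |s| ≤ 50 * (1/5) := by linarith
    _ = 10 := by norm_num

noncomputable def Bo (n : ℕ) : ℝ :=
  ((n:ℝ)+1) * (2^n * (50*((n:ℝ)+1))^(n/2)) *
    (Real.exp 1 * (4^n * (Nat.factorial n)) * (Nat.factorial ((3*n+3)/2))) * 10^n

lemma Bo_nonneg (n : ℕ) : 0 ≤ Bo n := by unfold Bo; positivity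

lemma gf_term_bound {d s : ℝ} (hd : 0 ≤ d) (h : 0 < wf d s) (n : ℕ) :
    |∑ i ∈ range (n+1), ac n i * Ff (n-i) (wf d s) * (-50*s)^(n-2*i)|
      ≤ Bo n * (wf d s)^2 := by
  obtain ⟨hs, hw1, hws⟩ := wf_facts hd h
  set w := wf d s with hwdef
  have hterm : ∀ i ∈ range (n+1),
      |ac n i * Ff (n-i) w * (-50*s)^(n-2*i)|
        ≤ (2^n * (50*((n:ℝ)+1))^(n/2)) *
            (Real.exp 1 * (4^n * (Nat.factorial n)) * (Nat.factorial ((3*n+3)/2)) * w^2) * 10^n := by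
    intro i hi
    rw [abs_mul, abs_mul]
    have hac : |ac n i| ≤ 2^n * (50*((n:ℝ)+1))^(n/2) := by
      rcases le_or_gt (2*i) n with h2i | h2i
      · refine (ac_abs_bound n i).trans ?_
        apply mul_le_mul_of_nonneg_left _ (by positivity)
        have hb : (1:ℝ) ≤ 50*((n:ℝ)+1) := by
          have : (0:ℝ) ≤ (n:ℝ) := by positivity
          linarith
        exact pow_le_pow_right₀ hb (by omega)
      · rw [ac_support n i h2i, abs_zero]; positivity
    have hFf : |Ff (n-i) w| ≤ Real.exp 1 * (4^n * (Nat.factorial n)) * (Nat.factorial ((3*n+3)/2)) * w^2 := by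
      refine (Ff_bound (n-i) h hw1).trans ?_
      have hni : n - i ≤ n := Nat.sub_le n i
      apply mul_le_mul_of_nonneg_right _ (by positivity)
      apply mul_le_mul
      · apply mul_le_mul_of_nonneg_left _ (le_of_lt (Real.exp_pos 1))
        apply mul_le_mul (pow_le_pow_right₀ (by norm_num) hni)
          (by exact_mod_cast Nat.factorial_le hni) (by positivity) (by positivity)
      · exact_mod_cast Nat.factorial_le (by omega : (3*(n-i)+3)/2 ≤ (3*n+3)/2)
      · positivity
      · positivity
    have hpow : |(-50*s)^(n-2*i)| ≤ 10^n := by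
      rw [abs_pow]
      calc |(-50)*s|^(n-2*i) ≤ 10^(n-2*i) := by
            apply pow_le_pow_left₀ (abs_nonneg _) hws
        _ ≤ 10^n := by
            apply pow_le_pow_right₀ (by norm_num) (Nat.sub_le _ _)
    exact mul_le_mul (mul_le_mul hac hFf (abs_nonneg _) (by positivity)) hpow
      (abs_nonneg _) (by positivity)
  refine (Finset.abs_sum_le_sum_abs _ _).trans ?_
  refine (Finset.sum_le_sum hterm).trans ?_
  rw [Finset.sum_const, Finset.card_range, nsmul_eq_mul]
  apply le_of_eq
  unfold Bo
  push_cast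
  ring

lemma gf_bound {d : ℝ} (hd : 0 ≤ d) (n : ℕ) (s : ℝ) : |gf d n s| ≤ Bo n := by
  unfold gf
  split
  · rename_i h
    refine (gf_term_bound hd h n).trans ?_
    have hw1 := (wf_facts hd h).2.1
    have hw2 : (wf d s)^2 ≤ 1 := by nlinarith
    nlinarith [Bo_nonneg n]
  · simpa using Bo_nonneg n

lemma ac_reindex (n : ℕ) (φ : ℕ → ℝ) (y : ℝ) :
    ∑ i ∈ range (n+2), ac (n+1) i * φ (n+1-i) * y^(n+1-2*i)
      = ∑ i ∈ range (n+1), ac n i * (φ (n-i+1) * y * y^(n-2*i)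
          + φ (n-i) * (((n-2*i : ℕ):ℝ) * y^(n-2*i-1) * (-50))) := by
  have expand : ∀ i ∈ range (n+2), ac (n+1) i * φ (n+1-i) * y^(n+1-2*i)
      = ac n i * φ (n+1-i) * y^(n+1-2*i)
        + ((-50) * ((n:ℝ)+2-2*i) * (if 1 ≤ i then ac n (i-1) else 0)) * φ (n+1-i) * y^(n+1-2*i) := by
    intro i _
    rw [show ac (n+1) i = ac n i + (-50) * ((n:ℝ) + 2 - 2*i) * (if 1 ≤ i then ac n (i-1) else 0) from rfl]
    ring
  rw [Finset.sum_congr rfl expand, Finset.sum_add_distrib]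
  have hA : ∑ i ∈ range (n+2), ac n i * φ (n+1-i) * y^(n+1-2*i)
      = ∑ i ∈ range (n+1), ac n i * (φ (n-i+1) * y * y^(n-2*i)) := by
    rw [Finset.sum_range_succ, ac_support n (n+1) (by omega)]
    simp only [zero_mul, add_zero]
    apply Finset.sum_congr rfl
    intro i hi
    simp only [Finset.mem_range] at hi
    rcases le_or_gt (2*i) n with h2i | h2i
    · rw [show n+1-i = n-i+1 from by omega, show n+1-2*i = (n-2*i)+1 from by omega,
        pow_succ]
      ring
    · rw [ac_support n i (by omega)]
      ring
  have hB : ∑ i ∈ range (n+2), ((-50) * ((n:ℝ)+2-2*i) * (if 1 ≤ i then ac n (i-1) else 0)) * φ (n+1-i) * y^(n+1-2*i)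
      = ∑ i ∈ range (n+1), ac n i * (φ (n-i) * (((n-2*i : ℕ):ℝ) * y^(n-2*i-1) * (-50))) := by
    rw [Finset.sum_range_succ' (fun i => ((-50) * ((n:ℝ)+2-2*i) * (if 1 ≤ i then ac n (i-1) else 0)) * φ (n+1-i) * y^(n+1-2*i))]
    simp only [Nat.le_refl, if_neg (by omega : ¬ (1:ℕ) ≤ 0), mul_zero, zero_mul, add_zero]
    apply Finset.sum_congr rfl
    intro j hj
    simp only [Finset.mem_range] at hj
    rw [if_pos (by omega : 1 ≤ j+1), Nat.add_sub_cancel]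
    rcases lt_trichotomy (2*j) n with h2j | h2j | h2j
    · rw [show n+1-(j+1) = n-j from by omega,
        show n+1-2*(j+1) = n-2*j-1 from by omega]
      have hc : ((n:ℝ)+2-2*(((j+1:ℕ)):ℝ)) = ((n-2*j : ℕ):ℝ) := by
        rw [Nat.cast_sub (by omega)]
        push_cast
        ring
      rw [hc]
      ring
    · have hc : ((n:ℝ)+2-2*((j:ℝ)+1)) = 0 := by
        have : (n:ℝ) = 2*(j:ℝ) := by exact_mod_cast h2j.symm
        rw [this]; ring
      have hc2 : ((n-2*j:ℕ):ℝ) = 0 := by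
        rw [show (n-2*j:ℕ) = 0 from by omega]; simp
      push_cast
      rw [hc, hc2]
      ring
    · rw [ac_support n j (by omega)]
      ring
  rw [hA, hB, ← Finset.sum_add_distrib]
  apply Finset.sum_congr rfl
  intro i _
  ring

lemma gf_hasDerivAt {d : ℝ} (hd : 0 ≤ d) (n : ℕ) (s : ℝ) :
    HasDerivAt (gf d n) (gf d (n+1) s) s := by
  rcases lt_trichotomy 0 (wf d s) with hpos | hzero | hneg
  · -- interior case
    have hU : IsOpen {t : ℝ | 0 < wf d t} := isOpen_lt continuous_const (wf_cont d)
    have hsU : s ∈ {t : ℝ | 0 < wf d t} := hpos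
    -- derivative of the explicit formula
    have hφ : HasDerivAt
        (fun t => ∑ i ∈ range (n+1), ac n i * Ff (n-i) (wf d t) * (-50*t)^(n-2*i))
        (∑ i ∈ range (n+1), ac n i * ((Ff (n-i+1) (wf d s) * (-50*s)) * (-50*s)^(n-2*i)
          + Ff (n-i) (wf d s) * (((n-2*i : ℕ):ℝ) * (-50*s)^(n-2*i-1) * (-50)))) s := by
      apply HasDerivAt.fun_sum
      intro i _
      have hF : HasDerivAt (fun t => Ff (n-i) (wf d t)) (Ff (n-i+1) (wf d s) * (-50*s)) s :=
        (Ff_hasDerivAt (n-i) (ne_of_gt hpos)).comp s (wf_hasDerivAt d s)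
      have hp : HasDerivAt (fun t : ℝ => (-50*t)^(n-2*i))
          (((n-2*i : ℕ):ℝ) * (-50*s)^(n-2*i-1) * (-50)) s := by
        have hlin : HasDerivAt (fun t : ℝ => -50*t) (-50) s := by
          simpa using (hasDerivAt_id s).const_mul (-50 : ℝ)
        exact hlin.pow (n-2*i)
      have hstep := (hF.mul hp).const_mul (ac n i)
      have hfun : (fun t => ac n i * Ff (n-i) (wf d t) * (-50*t)^(n-2*i))
          = (fun y => ac n i * (Ff (n-i) (wf d y) * (-50*y)^(n-2*i))) := by
        funext y; ring
      rw [hfun]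
      exact hstep
    have heq : gf d n =ᶠ[nhds s]
        (fun t => ∑ i ∈ range (n+1), ac n i * Ff (n-i) (wf d t) * (-50*t)^(n-2*i)) := by
      filter_upwards [hU.mem_nhds hsU] with t ht
      exact if_pos ht
    refine (HasDerivAt.congr_of_eventuallyEq ?_ heq)
    rw [gf, if_pos hpos]
    have := ac_reindex n (fun k => Ff k (wf d s)) (-50*s)
    rw [show n+1+1 = n+2 from rfl, this]
    convert hφ using 1
  · -- boundary case
    have hgf0 : gf d (n+1) s = 0 := by
      rw [gf, if_neg (by rw [← hzero]; exact lt_irrefl 0)]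
    rw [hgf0]
    have hs5 : |s| ≤ 1/5 := by
      have : 25*s^2 ≤ 1 := by unfold wf at hzero; nlinarith
      rw [abs_le]; constructor <;> nlinarith [sq_nonneg s]
    have hgs : gf d n s = 0 := by
      rw [gf, if_neg (by rw [← hzero]; exact lt_irrefl 0)]
    have hbound : ∀ t, |gf d n t| ≤ (100 * Bo n) * |t - s|^2 := by
      intro t
      rcases le_or_gt (wf d t) 0 with hw | hw
      · rw [gf, if_neg (not_lt.2 hw), abs_zero]
        exact mul_nonneg (by nlinarith [Bo_nonneg n]) (by positivity)
      · have h1 : |gf d n t| ≤ Bo n * (wf d t)^2 := by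
          rw [gf, if_pos hw]
          exact gf_term_bound hd hw n
        have ht5 : |t| ≤ 1/5 := (wf_facts hd hw).1
        have hwt : |wf d t| ≤ 10 * |t - s| := by
          have he : wf d t = wf d t - wf d s := by rw [← hzero]; ring
          have he2 : wf d t - wf d s = 25*(s - t)*(s + t) := by
            unfold wf; ring
          rw [he, he2, abs_mul, abs_mul]
          have h25 : |(25:ℝ)| = 25 := by norm_num
          rw [h25]
          have h1' : |s - t| = |t - s| := abs_sub_comm s t
          have h2' : |s + t| ≤ 2/5 := by
            refine (abs_add_le s t).trans ?_
            linarith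
          rw [h1']
          nlinarith [abs_nonneg (t - s)]
        have : (wf d t)^2 ≤ 100 * |t - s|^2 := by
          have := sq_abs (wf d t)
          nlinarith [abs_nonneg (wf d t), abs_nonneg (t - s)]
        refine h1.trans ?_
        nlinarith [Bo_nonneg n]
    rw [hasDerivAt_iff_isLittleO]
    rw [Asymptotics.isLittleO_iff]
    intro c hc
    have hev : ∀ᶠ t in nhds s, |t - s| ≤ c / (100 * Bo n + 1) := by
      have hpos' : 0 < c / (100 * Bo n + 1) := by
        apply div_pos hc
        nlinarith [Bo_nonneg n]
      filter_upwards [Metric.ball_mem_nhds s hpos'] with t ht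
      rw [Metric.mem_ball, Real.dist_eq] at ht
      exact ht.le
    filter_upwards [hev] with t ht
    rw [hgs]
    simp only [sub_zero, smul_zero, sub_zero]
    rw [Real.norm_eq_abs, Real.norm_eq_abs]
    refine (hbound t).trans ?_
    have h1 : (100 * Bo n) * |t - s|^2 ≤ (100 * Bo n + 1) * (|t - s| * |t - s|) := by
      nlinarith [abs_nonneg (t - s), Bo_nonneg n, sq_abs (t - s)]
    have h2 : (100 * Bo n + 1) * (|t - s| * |t - s|) ≤ c * |t - s| := by
      have hB1 : 0 < 100 * Bo n + 1 := by nlinarith [Bo_nonneg n]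
      have h3 : (100*Bo n + 1) * |t - s| ≤ c := (le_div_iff₀' hB1).1 ht
      nlinarith [abs_nonneg (t - s)]
    exact h1.trans h2
  · -- negative case
    have hU : IsOpen {t : ℝ | wf d t < 0} := isOpen_lt (wf_cont d) continuous_const
    have heq : gf d n =ᶠ[nhds s] (fun _ => (0:ℝ)) := by
      filter_upwards [hU.mem_nhds hneg] with t ht
      exact if_neg (by exact not_lt.2 (le_of_lt ht))
    have hgf0 : gf d (n+1) s = 0 := by
      rw [gf, if_neg (not_lt.2 (le_of_lt hneg))]
    rw [hgf0]
    exact (hasDerivAt_const s 0).congr_of_eventuallyEq heq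

lemma gf_zero_eq (d : ℝ) : gf d 0 = Gf d := by
  funext s
  rw [gf, Gf]
  split
  · rw [Finset.sum_range_one]
    norm_num [ac, Ff, Pval, qc]
  · rfl

lemma iteratedDeriv_Gf {d : ℝ} (hd : 0 ≤ d) : ∀ n, iteratedDeriv n (Gf d) = gf d n := by
  intro n
  induction n with
  | zero => rw [iteratedDeriv_zero, gf_zero_eq]
  | succ n ih =>
    rw [iteratedDeriv_succ, ih]
    funext t
    exact (gf_hasDerivAt hd n t).deriv

lemma gf_lipschitz {d : ℝ} (hd : 0 ≤ d) (p : ℕ) (t t' : ℝ) :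
    |gf d p t - gf d p t'| ≤ Bo (p+1) * |t - t'| := by
  have h := Convex.norm_image_sub_le_of_norm_hasDerivWithin_le
    (f := gf d p) (f' := gf d (p+1)) (s := Set.univ) (C := Bo (p+1))
    (fun x _ => (gf_hasDerivAt hd p x).hasDerivWithinAt)
    (fun x _ => by rw [Real.norm_eq_abs]; exact gf_bound hd (p+1) x)
    convex_univ (Set.mem_univ t') (Set.mem_univ t)
  rw [Real.norm_eq_abs, Real.norm_eq_abs] at h
  exact h

/-- The numeric estimate: `Bo (p+1) ≤ exp (3p log p + c p)` with
`c = log (240*80*150^8*32)`. -/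
noncomputable def cK : ℝ := Real.log (240*80*150^8*32)

lemma Bo_le (p : ℕ) (hp : 1 ≤ p) :
    Bo (p+1) ≤ Real.exp (3 * p * Real.log p + cK * p) := by
  have hp1 : (1:ℝ) ≤ (p:ℝ) := by exact_mod_cast hp
  have hp0 : (0:ℝ) < (p:ℝ) := by linarith
  -- RHS = p^(3p) * K^p
  have hrhs : Real.exp (3 * p * Real.log p + cK * p)
      = (p:ℝ)^(3*p) * ((240*80*150^8*32:ℝ))^p := by
    rw [Real.exp_add]
    congr 1
    · rw [show (3:ℝ) * p * Real.log p = (((3*p : ℕ)):ℝ) * Real.log p by push_cast; ring,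
        Real.exp_nat_mul, Real.exp_log hp0]
    · rw [show cK * p = ((p:ℕ):ℝ) * cK by push_cast; ring, Real.exp_nat_mul, cK,
        Real.exp_log (by norm_num)]
  rw [hrhs]
  -- bound each factor of Bo (p+1)
  have e3 : Real.exp 1 ≤ 3 := by
    have := Real.exp_one_lt_d9
    linarith
  unfold Bo
  -- Bo (p+1) = (p+2) * (2^(p+1) * (50*(p+2))^((p+1)/2)) * (e * (4^(p+1) * (p+1)!) * ((3p+6)/2)!) * 10^(p+1)
  push_cast
  have h1 : ((p:ℝ)+1+1) ≤ 150*(p:ℝ) := by linarith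
  have h2 : (2:ℝ)^(p+1) ≤ 2*2^p := by rw [pow_succ]; linarith [pow_nonneg (by norm_num : (0:ℝ) ≤ 2) p]
  have h4 : (4:ℝ)^(p+1) ≤ 4*4^p := by rw [pow_succ]; linarith [pow_nonneg (by norm_num : (0:ℝ) ≤ 4) p]
  have h10 : (10:ℝ)^(p+1) ≤ 10*10^p := by rw [pow_succ]; linarith [pow_nonneg (by norm_num : (0:ℝ) ≤ 10) p]
  have h3 : ((50:ℝ)*((p:ℝ)+1+1))^((p+1)/2) ≤ (150*(p:ℝ))^((p+1)/2) := by
    apply pow_le_pow_left₀ (by positivity) (by linarith)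
  have h5 : ((Nat.factorial (p+1)):ℝ) ≤ (150*(p:ℝ))^(p+1) := by
    calc ((Nat.factorial (p+1)):ℝ) ≤ ((p+1:ℕ):ℝ)^(p+1) := by
          exact_mod_cast Nat.factorial_le_pow (p+1)
      _ ≤ (150*(p:ℝ))^(p+1) := by
          apply pow_le_pow_left₀ (by positivity)
          push_cast; linarith
  have h6 : ((Nat.factorial ((3*(p+1)+3)/2)):ℝ) ≤ (150*(p:ℝ))^((3*p+6)/2) := by
    calc ((Nat.factorial ((3*(p+1)+3)/2)):ℝ) ≤ (((3*(p+1)+3)/2:ℕ):ℝ)^((3*(p+1)+3)/2) := by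
          exact_mod_cast Nat.factorial_le_pow _
      _ ≤ (150*(p:ℝ))^((3*p+6)/2) := by
          rw [show (3*(p+1)+3)/2 = (3*p+6)/2 from by omega]
          apply pow_le_pow_left₀ (by positivity)
          have : ((3*p+6)/2 : ℕ) ≤ 3*p+6 := Nat.div_le_self _ _
          have hcast : (((3*p+6)/2:ℕ):ℝ) ≤ ((3*p+6:ℕ):ℝ) := by exact_mod_cast this
          push_cast at hcast ⊢
          linarith
  -- combine powers of (150 p)
  have hbase : (1:ℝ) ≤ 150*(p:ℝ) := by linarith
  have hppow : (150*(p:ℝ)) * (150*(p:ℝ))^((p+1)/2) * (150*(p:ℝ))^(p+1) * (150*(p:ℝ))^((3*p+6)/2)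
      ≤ (150*(p:ℝ))^(3*p+5) := by
    calc (150*(p:ℝ)) * (150*(p:ℝ))^((p+1)/2) * (150*(p:ℝ))^(p+1) * (150*(p:ℝ))^((3*p+6)/2)
        = (150*(p:ℝ))^(1 + (p+1)/2 + (p+1) + (3*p+6)/2) := by
          rw [pow_add, pow_add, pow_add, pow_one]
          ring
      _ ≤ (150*(p:ℝ))^(3*p+5) := pow_le_pow_right₀ hbase (by omega)
  have step1 : ((p:ℝ)+1+1) * (2^(p+1) * (50*((p:ℝ)+1+1))^((p+1)/2)) *
      (Real.exp 1 * (4^(p+1) * ((Nat.factorial (p+1)):ℝ)) * ((Nat.factorial ((3*(p+1)+3)/2)):ℝ)) * 10^(p+1)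
      ≤ (150*(p:ℝ)) * (2*2^p * (150*(p:ℝ))^((p+1)/2)) *
        (3 * (4*4^p * (150*(p:ℝ))^(p+1)) * (150*(p:ℝ))^((3*p+6)/2)) * (10*10^p) := by
    gcongr <;> first
      | exact h1 | exact h2 | exact h3 | exact e3 | exact h4 | exact h5 | exact h6 | exact h10
      | positivity | linarith
  have hmul : (2:ℝ)^p * 4^p * 10^p = 80^p := by
    rw [← mul_pow, ← mul_pow]; norm_num
  have step2 : (150*(p:ℝ)) * (2*2^p * (150*(p:ℝ))^((p+1)/2)) *
        (3 * (4*4^p * (150*(p:ℝ))^(p+1)) * (150*(p:ℝ))^((3*p+6)/2)) * (10*10^p)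
      = 240 * 80^p * ((150*(p:ℝ)) * (150*(p:ℝ))^((p+1)/2) * (150*(p:ℝ))^(p+1) * (150*(p:ℝ))^((3*p+6)/2)) := by
    rw [← hmul]; ring
  have step3 : (240:ℝ) * 80^p * (150*(p:ℝ))^(3*p+5) ≤ (p:ℝ)^(3*p) * ((240*80*150^8*32:ℝ))^p := by
    have hp5 : (p:ℝ)^5 ≤ 32^p := by
      have h2p : (p:ℝ) ≤ 2^p := by exact_mod_cast (Nat.lt_two_pow_self).le
      calc (p:ℝ)^5 ≤ ((2:ℝ)^p)^5 := pow_le_pow_left₀ (by positivity) h2p 5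
        _ = ((2:ℝ)^5)^p := by rw [← pow_mul, ← pow_mul, Nat.mul_comm]
        _ = 32^p := by norm_num
    have h150 : (150:ℝ)^(3*p+5) ≤ ((150:ℝ)^8)^p := by
      rw [← pow_mul]
      apply pow_le_pow_right₀ (by norm_num)
      omega
    have h240 : (240:ℝ) ≤ 240^p := le_self_pow₀ (by norm_num) (by omega)
    calc (240:ℝ) * 80^p * (150*(p:ℝ))^(3*p+5)
        = (p:ℝ)^(3*p) * (240 * 80^p * (150:ℝ)^(3*p+5) * (p:ℝ)^5) := by
          rw [mul_pow, show 3*p+5 = 3*p+5 from rfl, pow_add (p:ℝ) (3*p) 5]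
          ring
      _ ≤ (p:ℝ)^(3*p) * (240^p * 80^p * ((150:ℝ)^8)^p * 32^p) := by
          have hfac : (240:ℝ) * 80^p * (150:ℝ)^(3*p+5) * (p:ℝ)^5
              ≤ 240^p * 80^p * ((150:ℝ)^8)^p * 32^p := by
            have w1 : (0:ℝ) ≤ 80^p := by positivity
            have w2 : (0:ℝ) ≤ (150:ℝ)^(3*p+5) := by positivity
            have w3 : (0:ℝ) ≤ (p:ℝ)^5 := by positivity
            calc (240:ℝ) * 80^p * (150:ℝ)^(3*p+5) * (p:ℝ)^5
                ≤ 240^p * 80^p * (150:ℝ)^(3*p+5) * (p:ℝ)^5 := by gcongr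
              _ ≤ 240^p * 80^p * ((150:ℝ)^8)^p * (p:ℝ)^5 := by gcongr
              _ ≤ 240^p * 80^p * ((150:ℝ)^8)^p * 32^p := by gcongr
          apply mul_le_mul_of_nonneg_left hfac (by positivity)
      _ = (p:ℝ)^(3*p) * ((240*80*150^8*32:ℝ))^p := by
          rw [← mul_pow, ← mul_pow, ← mul_pow]
  calc ((p:ℝ)+1+1) * (2^(p+1) * (50*((p:ℝ)+1+1))^((p+1)/2)) *
      (Real.exp 1 * (4^(p+1) * ((Nat.factorial (p+1)):ℝ)) * ((Nat.factorial ((3*(p+1)+3)/2)):ℝ)) * 10^(p+1)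
      ≤ (150*(p:ℝ)) * (2*2^p * (150*(p:ℝ))^((p+1)/2)) *
        (3 * (4*4^p * (150*(p:ℝ))^(p+1)) * (150*(p:ℝ))^((3*p+6)/2)) * (10*10^p) := step1
    _ = 240 * 80^p * ((150*(p:ℝ)) * (150*(p:ℝ))^((p+1)/2) * (150*(p:ℝ))^(p+1) * (150*(p:ℝ))^((3*p+6)/2)) := step2
    _ ≤ 240 * 80^p * (150*(p:ℝ))^(3*p+5) := by
        apply mul_le_mul_of_nonneg_left hppow (by positivity)
    _ ≤ (p:ℝ)^(3*p) * ((240*80*150^8*32:ℝ))^p := step3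

lemma iteratedDeriv_shift {d : ℝ} (hd : 0 ≤ d) (b : ℝ) :
    ∀ n, iteratedDeriv n (fun t => Gf d (t + b)) = fun t => gf d n (t + b) := by
  intro n
  induction n with
  | zero => rw [iteratedDeriv_zero, gf_zero_eq]
  | succ n ih =>
    rw [iteratedDeriv_succ, ih]
    funext t
    exact (HasDerivAt.comp_add_const t b (gf_hasDerivAt hd n (t+b))).deriv

lemma Psi_eq_Gf (d s : ℝ) : Psi (1 - (25/2)*(s^2 + d)) = Gf d s := by
  have hw : wf d s = 2*(1 - (25/2)*(s^2 + d)) - 1 := by unfold wf; ring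
  rw [Psi, Gf]
  rcases le_or_gt (1 - (25/2)*(s^2 + d)) (1/2) with h | h
  · rw [if_pos h, if_neg]
    rw [hw]
    intro hcon
    nlinarith
  · rw [if_neg (not_le.2 h), if_pos]
    · congr 1
      rw [hw]
      rw [one_div, inv_pow]
    · rw [hw]; nlinarith

lemma Psi_zero {y : ℝ} (h : y ≤ 1/2) : Psi y = 0 := if_pos h

lemma Psi_bounds {y : ℝ} (h1 : y ≤ 1) : 0 ≤ Psi y ∧ Psi y ≤ 1 := by
  rw [Psi]
  split
  · norm_num
  · rename_i h2
    push_neg at h2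
    constructor
    · positivity
    · rw [show Real.exp (1 - 1/(2*y - 1)^2) ≤ 1 ↔ 1 - 1/(2*y - 1)^2 ≤ 0 from Real.exp_le_one_iff]
      have hz : (0:ℝ) < 2*y - 1 := by linarith
      have hz1 : (2*y - 1) ≤ 1 := by linarith
      have : (1:ℝ) ≤ 1/(2*y-1)^2 := by
        rw [le_div_iff₀ (by positivity)]
        nlinarith
      linarith

lemma norm_sq_expand {T : ℕ} (y v : EuclideanSpace ℝ (Fin T)) (hv : ‖v‖ = 1) (t : ℝ) :
    ‖y + t • v‖^2 = (t + (inner ℝ y v : ℝ))^2 + (‖y‖^2 - (inner ℝ y v : ℝ)^2) := by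
  rw [norm_add_sq_real, real_inner_smul_right, norm_smul, hv, mul_one, Real.norm_eq_abs,
    sq_abs]
  ring

lemma dirFun_eq (T : ℕ) (hT : 1 ≤ T) (x v : EuclideanSpace ℝ (Fin T)) (hv : ‖v‖ = 1) :
    ∃ b d : ℝ, 0 ≤ d ∧ dirFun (hbar T hT) x v = fun t => Gf d (t + b) := by
  set a : EuclideanSpace ℝ (Fin T) := (4/5 : ℝ) • EuclideanSpace.single ⟨T-1, by omega⟩ 1 with ha
  refine ⟨(inner ℝ (x - a) v : ℝ), ‖x - a‖^2 - (inner ℝ (x - a) v : ℝ)^2, ?_, ?_⟩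
  · have h := abs_real_inner_le_norm (x - a) v
    rw [hv, mul_one] at h
    nlinarith [abs_nonneg (inner ℝ (x - a) v : ℝ), sq_abs (inner ℝ (x - a) v : ℝ)]
  · funext t
    rw [dirFun, hbar]
    have hxy : x + t • v - a = (x - a) + t • v := by abel
    rw [show x + t • v - (4/5 : ℝ) • EuclideanSpace.single (⟨T-1, by omega⟩ : Fin T) 1
        = (x - a) + t • v from hxy]
    rw [norm_sq_expand (x - a) v hv t]
    exact Psi_eq_Gf _ _

lemma part3 (T : ℕ) (hT : 1 ≤ T) (p : ℕ) (hp : 1 ≤ p) :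
    HasLipschitzDerivs p (Real.exp (3 * p * Real.log p + cK * p)) (hbar T hT) := by
  intro x v hv t t'
  obtain ⟨b, d, hd, heq⟩ := dirFun_eq T hT x v hv
  rw [heq, iteratedDeriv_shift hd b p]
  have h := gf_lipschitz hd p (t+b) (t'+b)
  rw [show t + b - (t'+b) = t - t' from by ring] at h
  refine h.trans ?_
  exact mul_le_mul_of_nonneg_right (Bo_le p hp) (abs_nonneg _)


/-- (i) h̄_T((4/5)e^{(T)}) = 1 and 0 ≤ h̄_T ≤ 1; (ii) h̄_T(x) = 0 whenever x_T ≤ 3/5 or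
‖x‖ ≥ 1; (iii) there is a numerical constant c, independent of T and p, such that the
p-th order derivatives of h̄_T are exp(3p·log p + c·p)-Lipschitz for every p ≥ 1. -/
theorem stmt18 :
    ∃ c : ℝ, ∀ (T : ℕ) (hT : 1 ≤ T),
      (hbar T hT ((4/5 : ℝ) • EuclideanSpace.single ⟨T-1, by omega⟩ 1) = 1 ∧
        ∀ x, 0 ≤ hbar T hT x ∧ hbar T hT x ≤ 1) ∧
      (∀ x : EuclideanSpace ℝ (Fin T),
        (x ⟨T-1, by omega⟩ ≤ 3/5 ∨ 1 ≤ ‖x‖) → hbar T hT x = 0) ∧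
      (∀ p : ℕ, 1 ≤ p →
        HasLipschitzDerivs p (Real.exp (3 * p * Real.log p + c * p)) (hbar T hT)) := by
  refine ⟨cK, fun T hT => ⟨⟨?_, ?_⟩, ?_, fun p hp => part3 T hT p hp⟩⟩
  · -- value at center
    rw [hbar, sub_self, norm_zero]
    norm_num [Psi, Real.exp_zero]
  · -- bounds
    intro x
    rw [hbar]
    apply Psi_bounds
    nlinarith [norm_nonneg (x - (4/5 : ℝ) • EuclideanSpace.single (⟨T-1, by omega⟩ : Fin T) 1),
      sq_nonneg ‖x - (4/5 : ℝ) • EuclideanSpace.single (⟨T-1, by omega⟩ : Fin T) 1‖]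
  · -- vanishing
    intro x hx
    rw [hbar]
    apply Psi_zero
    set a : EuclideanSpace ℝ (Fin T) := (4/5 : ℝ) • EuclideanSpace.single ⟨T-1, by omega⟩ 1 with ha
    have hkey : (1:ℝ)/25 ≤ ‖x - a‖^2 := by
      rcases hx with hx | hx
      · set j : Fin T := ⟨T-1, by omega⟩ with hj
        have hsum : ‖x - a‖^2 = ∑ i, |(x - a) i|^2 := by
          rw [EuclideanSpace.norm_eq, Real.sq_sqrt (by positivity)]
          simp [Real.norm_eq_abs]
        have hterm : |(x - a) j|^2 ≤ ∑ i, |(x - a) i|^2 := by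
          apply Finset.single_le_sum (f := fun i => |(x - a) i|^2)
          · intro i _; positivity
          · exact Finset.mem_univ j
        have hcoord : (x - a) j = x j - 4/5 := by
          have : a j = 4/5 := by
            rw [ha]
            simp [EuclideanSpace.single_apply]
          simp [this]
        have hsq : (1:ℝ)/25 ≤ |(x - a) j|^2 := by
          rw [hcoord, sq_abs]
          nlinarith
        rw [hsum]
        exact hsq.trans hterm
      · have hna : ‖a‖ = 4/5 := by
          rw [ha, norm_smul, EuclideanSpace.norm_single]
          norm_num
        have h1 : (1:ℝ)/5 ≤ ‖x - a‖ := by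
          have := norm_sub_norm_le x a
          rw [hna] at this
          linarith
        nlinarith [norm_nonneg (x - a)]
    nlinarith
end
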